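/- Every string [c_1,…,c_n] of type T that is not Du Val satisfies c_1 · c_n ≥ 6. -/

import Mathlib

/-- Hirzebruch–Jung continued fraction value of a list:
`hjValue [a₁, …, a_r] = a₁ - 1/(a₂ - 1/(⋯ - 1/a_r))`.
(For the empty list the value is `0`, and since `1/0 = 0` in `ℚ`,
`hjValue [a] = a`.) -/
def hjValue : List ℤ → ℚ
  | [] => 0
  | a :: l => (a : ℚ) - 1 / hjValue l

/-- A *string* is a nonempty finite sequence of integers, all `≥ 2`. -/
def IsString (l : List ℤ) : Prop := l ≠ [] ∧ ∀ x ∈ l, 2 ≤ x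

/-- Two strings are *conjugate* if their values are `m/q` and `m/(m-q)`
for some coprime integers `m > q ≥ 1`. -/
def IsConjugate (a b : List ℤ) : Prop :=
  ∃ m q : ℕ, 1 ≤ q ∧ q < m ∧ Nat.Coprime m q ∧
    hjValue a = (m : ℚ) / q ∧ hjValue b = (m : ℚ) / ((m : ℚ) - q)

/-- A string is of *type T* if its value, written in lowest terms `n/q` with
coprime `n > q ≥ 1`, satisfies `n ∣ (q+1)²`. -/
def IsTString (l : List ℤ) : Prop :=
  IsString l ∧ ∃ n q : ℕ, 1 ≤ q ∧ q < n ∧ Nat.Coprime n q ∧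
    hjValue l = (n : ℚ) / q ∧ n ∣ (q + 1) ^ 2

/-- A string is *Du Val* if all its entries equal `2`. -/
def IsDuVal (l : List ℤ) : Prop := ∀ x ∈ l, x = 2

/-- Every string `[c₁,…,c_n]` of type T that is not Du Val satisfies
`c₁ * c_n ≥ 6`. -/
def hjM (p : ℤ × ℤ) : List ℤ → ℤ × ℤ
  | [] => p
  | a :: l => (a * (hjM p l).1 - (hjM p l).2, (hjM p l).1)

lemma hjM_nil (p : ℤ × ℤ) : hjM p [] = p := rfl
lemma hjM_fst (p : ℤ × ℤ) (a : ℤ) (l : List ℤ) :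
    (hjM p (a :: l)).1 = a * (hjM p l).1 - (hjM p l).2 := rfl
lemma hjM_snd (p : ℤ × ℤ) (a : ℤ) (l : List ℤ) :
    (hjM p (a :: l)).2 = (hjM p l).1 := rfl

lemma getLastI_cons_of_ne (a : ℤ) {l : List ℤ} (h : l ≠ []) :
    (a :: l).getLastI = l.getLastI := by
  rcases l with _ | ⟨b, t⟩
  · exact absurd rfl h
  · simp [List.getLastI_eq_getLast?]

lemma getLastI_mem {l : List ℤ} (h : l ≠ []) : l.getLastI ∈ l := by
  rw [List.getLastI_eq_getLast?, List.getLast?_eq_getLast h]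
  exact List.getLast_mem h

def HJP (l : List ℤ) : Prop :=
  1 ≤ (hjM (1,0) l).2 ∧ (hjM (1,0) l).2 < (hjM (1,0) l).1 ∧
  0 ≤ (hjM (0,-1) l).2 ∧ (hjM (0,-1) l).2 < (hjM (0,-1) l).1 ∧
  (hjM (0,-1) l).1 * (hjM (1,0) l).2 - (hjM (1,0) l).1 * (hjM (0,-1) l).2 = 1 ∧
  1 ≤ (hjM (1,0) l).1 - (l.getLastI - 1) * (hjM (0,-1) l).1 ∧
  0 ≤ (hjM (1,0) l).2 - (l.getLastI - 1) * (hjM (0,-1) l).2 ∧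
  (hjM (1,0) l).2 - (l.getLastI - 1) * (hjM (0,-1) l).2 ≤
    (hjM (1,0) l).1 - (l.getLastI - 1) * (hjM (0,-1) l).1 ∧
  l.getLastI * (hjM (0,-1) l).2 - (hjM (1,0) l).2 <
    l.getLastI * (hjM (0,-1) l).1 - (hjM (1,0) l).1 ∧
  -1 ≤ l.getLastI * (hjM (0,-1) l).2 - (hjM (1,0) l).2 ∧
  hjValue l = ((hjM (1,0) l).1 : ℚ) / ((hjM (1,0) l).2 : ℚ)

lemma hjP_cons (a : ℤ) {l : List ℤ} (hl : l ≠ []) (ha : 2 ≤ a)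
    (hstr : ∀ x ∈ l, 2 ≤ x) (ih : HJP l) : HJP (a :: l) := by
  obtain ⟨i1, i2, i3, i4, idet, iu, iv, iuv, iwx, ix, ival⟩ := ih
  set A' := (hjM (1,0) l).1 with hA'
  set C' := (hjM (1,0) l).2 with hC'
  set b' := (hjM (0,-1) l).1 with hb'
  set d' := (hjM (0,-1) l).2 with hd'
  set e := l.getLastI with he
  have he2 : 2 ≤ e := hstr _ (getLastI_mem hl)
  have hAA : 2 * A' ≤ a * A' := mul_le_mul_of_nonneg_right ha (by linarith)
  have hbb : 2 * b' ≤ a * b' := mul_le_mul_of_nonneg_right ha (by linarith)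
  have hu : 2 * (A' - (e-1)*b') ≤ a * (A' - (e-1)*b') :=
    mul_le_mul_of_nonneg_right ha (by linarith)
  have hw : 2 * (e*b' - A') ≤ a * (e*b' - A') :=
    mul_le_mul_of_nonneg_right ha (by linarith)
  unfold HJP
  rw [getLastI_cons_of_ne a hl]
  simp only [hjM_fst, hjM_snd, ← hA', ← hC', ← hb', ← hd', ← he]
  refine ⟨by linarith, by nlinarith, by linarith, by nlinarith,
    by linear_combination idet, by nlinarith, by nlinarith, by nlinarith,
    by nlinarith, by nlinarith, ?_⟩
  have hC'0 : (C' : ℚ) ≠ 0 := by exact_mod_cast (by linarith : C' ≠ 0)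
  have hA'0 : (A' : ℚ) ≠ 0 := by exact_mod_cast (by linarith : A' ≠ 0)
  show (a : ℚ) - 1 / hjValue l = _
  rw [ival]
  push_cast
  field_simp

lemma hj_key (l : List ℤ) (hne : l ≠ []) (h : ∀ x ∈ l, 2 ≤ x) : HJP l := by
  induction l with
  | nil => exact absurd rfl hne
  | cons a l ih =>
    have ha : 2 ≤ a := h a (by simp)
    rcases l with _ | ⟨b, t⟩
    · unfold HJP
      simp only [hjM_fst, hjM_snd, hjM_nil, List.getLastI, hjValue]
      norm_num
      linarith
    · exact hjP_cons a (by simp) ha (fun x hx => h x (by simp [hx]))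
        (ih (by simp) (fun x hx => h x (by simp [hx])))

lemma hjAC_pos (l : List ℤ) (h : ∀ x ∈ l, 2 ≤ x) :
    0 ≤ (hjM (1,0) l).2 ∧ (hjM (1,0) l).2 < (hjM (1,0) l).1 := by
  induction l with
  | nil => simp [hjM_nil]
  | cons a t ih =>
    obtain ⟨h1, h2⟩ := ih (fun x hx => h x (by simp [hx]))
    have ha : 2 ≤ a := h a (by simp)
    have : 2 * (hjM (1,0) t).1 ≤ a * (hjM (1,0) t).1 :=
      mul_le_mul_of_nonneg_right ha (by linarith)
    simp only [hjM_fst, hjM_snd]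
    constructor <;> linarith

lemma allTwo : ∀ l : List ℤ, (∀ x ∈ l, 2 ≤ x) →
    (hjM (1,0) l).1 = (hjM (1,0) l).2 + 1 → ∀ x ∈ l, x = 2 := by
  intro l
  induction l with
  | nil => simp
  | cons a t ih =>
    intro h heq x hx
    obtain ⟨h1, h2⟩ := hjAC_pos t (fun x hx => h x (by simp [hx]))
    have ha : 2 ≤ a := h a (by simp)
    rw [hjM_fst, hjM_snd] at heq
    have ht : 2 * (hjM (1,0) t).1 ≤ a * (hjM (1,0) t).1 :=
      mul_le_mul_of_nonneg_right ha (by linarith)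
    have ha2 : a = 2 := by nlinarith
    have htt : (hjM (1,0) t).1 = (hjM (1,0) t).2 + 1 := by
      rw [ha2] at heq; linarith
    rcases List.mem_cons.mp hx with rfl | hx
    · exact ha2
    · exact ih (fun x hx => h x (by simp [hx])) htt x hx

lemma nt_lemma (n q q' : ℤ) (h1 : 1 ≤ q) (h2 : q < n) (h1' : 1 ≤ q') (h2' : q' < n)
    (h3 : n < 2*q) (h3' : n < 2*q') (hco : IsCoprime n q)
    (hT : n ∣ (q+1)^2) (hinv : n ∣ q*q' - 1) : q = n - 1 := by
  set s := n - q with hs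
  set s' := n - q' with hs'
  by_contra hne
  have hs2 : 2 ≤ s := by
    have : 1 ≤ s := by omega
    rcases eq_or_lt_of_le this with h | h
    · exact absurd (by omega : q = n - 1) hne
    · omega
  have hs'2 : 2 ≤ s' := by
    by_contra hlt
    have hs'1 : s' = 1 := by omega
    have hq' : q' = n - 1 := by omega
    have : n ∣ q + 1 := by
      obtain ⟨k, hk⟩ := hinv
      exact ⟨q - k, by rw [hq'] at hk; ring_nf; ring_nf at hk; linarith⟩
    have hle : n ≤ q + 1 := Int.le_of_dvd (by linarith) this
    omega
  have h4 : n ∣ (s-1)^2 := by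
    obtain ⟨k, hk⟩ := hT
    exact ⟨k - (n - 2*s + 2), by linear_combination hk⟩
  have h5 : n ∣ s*s' - 1 := by
    obtain ⟨k, hk⟩ := hinv
    exact ⟨k + n - q - q', by linear_combination hk⟩
  have h6 : n ∣ (s'-1)^2 := by
    have hA : n ∣ (s*s' - s')^2 := by
      obtain ⟨k, hk⟩ := h4
      exact ⟨s'^2 * k, by linear_combination s'^2 * hk⟩
    have hB : n ∣ (s*s' - s')^2 - (1 - s')^2 := by
      obtain ⟨k, hk⟩ := h5
      exact ⟨k * (s*s' + 1 - 2*s'), by linear_combination (s*s' + 1 - 2*s') * hk⟩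
    have := dvd_sub hA hB
    have heq : (s*s' - s')^2 - ((s*s' - s')^2 - (1 - s')^2) = (s'-1)^2 := by ring
    rwa [heq] at this
  have h7 : n ∣ 2*s + 2*s' - 4 := by
    have H := dvd_add (h4.mul_left (s'^2)) (dvd_add (h6.mul_left (2*s-1))
      (h5.mul_left (3 - s*s')))
    have heq : s'^2 * (s-1)^2 + ((2*s-1) * (s'-1)^2 + (3 - s*s') * (s*s' - 1))
        = 2*s + 2*s' - 4 := by ring
    rwa [heq] at H
  have hs2n : 2*s < n := by omega
  have hs'2n : 2*s' < n := by omega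
  obtain ⟨k, hk⟩ := h7
  have hn0 : 0 < n := by linarith
  have hk1 : k = 1 := by nlinarith
  rw [hk1, mul_one] at hk
  -- n = 2s + 2s' - 4 ; set m = s + s' - 2
  set m := s + s' - 2 with hm
  have hnm : n = 2 * m := by omega
  have h8 : n ∣ s * m := by
    have H := dvd_add h4 h5
    have heq : (s-1)^2 + (s*s' - 1) = s * m := by rw [hm]; ring
    rwa [heq] at H
  have hm0 : 0 < m := by omega
  obtain ⟨j, hj⟩ := h8
  have hsev : s = 2 * j := by
    rw [hnm] at hj
    have : m * (s - 2*j) = 0 := by linarith [hj]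
    rcases mul_eq_zero.mp this with h | h
    · omega
    · omega
  have h2n : (2 : ℤ) ∣ n := ⟨m, hnm⟩
  have h2q : (2 : ℤ) ∣ q := ⟨m - j, by omega⟩
  have := hco.isUnit_of_dvd' h2n h2q
  rw [Int.isUnit_iff] at this
  omega

lemma ident_lemma (n q : ℕ) (A C : ℤ) (hq : 1 ≤ q) (hco : Nat.Coprime n q)
    (hC : 1 ≤ C) (hA : 1 ≤ A) (hcoAC : IsCoprime A C)
    (heq : (n : ℚ) / q = (A : ℚ) / C) : (n : ℤ) = A ∧ (q : ℤ) = C := by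
  have hq0 : (q : ℚ) ≠ 0 := by positivity
  have hC0 : (C : ℚ) ≠ 0 := by
    exact_mod_cast (by linarith : C ≠ 0)
  have hcross : (n : ℤ) * C = q * A := by
    have : (n : ℚ) * C = q * A := by
      field_simp at heq
      linarith [heq]
    exact_mod_cast this
  have hconq : IsCoprime (n : ℤ) (q : ℤ) := by
    rw [Int.isCoprime_iff_gcd_eq_one]
    exact_mod_cast hco
  have hd1 : (n : ℤ) ∣ A := by
    refine hconq.dvd_of_dvd_mul_left ⟨C, ?_⟩
    linarith [hcross]
  have hd2 : A ∣ (n : ℤ) := by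
    refine hcoAC.dvd_of_dvd_mul_right ⟨q, ?_⟩
    linarith [hcross]
  have hnA : (n : ℤ) = A := Int.dvd_antisymm (by positivity) (by linarith) hd1 hd2
  refine ⟨hnA, ?_⟩
  have : A * (q : ℤ) = A * C := by linear_combination C * hnA - hcross
  exact mul_left_cancel₀ (by linarith) this

theorem tString_head_mul_getLast (c : List ℤ) (h : IsTString c)
    (hnd : ¬ IsDuVal c) : 6 ≤ c.headI * c.getLastI := by
  obtain ⟨⟨hne, hstr⟩, n, q, hq1, hqn, hco, hval, hdvd⟩ := h
  have hh : 2 ≤ c.headI := by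
    rcases c with _ | ⟨a, l⟩
    · exact absurd rfl hne
    · exact hstr a (by simp)
  have hl : 2 ≤ c.getLastI := hstr _ (getLastI_mem hne)
  rcases le_or_gt 3 c.headI with h3 | h3
  · rcases le_or_gt 3 c.getLastI with h3' | h3'
    · nlinarith
    · have h2 : c.getLastI = 2 := by omega
      nlinarith
  · have hh2 : c.headI = 2 := by omega
    rcases le_or_gt 3 c.getLastI with h3' | h3'
    · nlinarith
    · have hl2 : c.getLastI = 2 := by omega
      exfalso
      rcases c with _ | ⟨a, l⟩
      · exact absurd rfl hne
      have ha2 : a = 2 := by simpa using hh2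
      rcases l with _ | ⟨b, t⟩
      · exact hnd (by intro x hx; simp at hx; omega)
      have hLne : (b :: t) ≠ [] := by simp
      have hstrL : ∀ x ∈ b :: t, 2 ≤ x := fun x hx => hstr x (by simp [hx])
      obtain ⟨k1, k2, k3, k4, kdet, ku, kv, kuv, kwx, kx, kval⟩ :=
        hj_key (a :: b :: t) (by simp) hstr
      obtain ⟨i1, i2, i3, i4, idet, iu, iv, iuv, iwx, ix, ival⟩ :=
        hj_key (b :: t) hLne hstrL
      have hgl : (a :: b :: t).getLastI = (b :: t).getLastI :=
        getLastI_cons_of_ne a hLne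
      have he : (b :: t).getLastI = 2 := by rw [← hgl]; exact hl2
      subst ha2
      rw [hgl, he] at ku kv kuv kwx kx
      rw [he] at iu iv iuv iwx ix
      have eA : (hjM (1,0) (2 :: b :: t)).1
          = 2 * (hjM (1,0) (b :: t)).1 - (hjM (1,0) (b :: t)).2 := hjM_fst _ _ _
      have eC : (hjM (1,0) (2 :: b :: t)).2 = (hjM (1,0) (b :: t)).1 := hjM_snd _ _ _
      have eB : (hjM (0,-1) (2 :: b :: t)).1
          = 2 * (hjM (0,-1) (b :: t)).1 - (hjM (0,-1) (b :: t)).2 := hjM_fst _ _ _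
      have eD : (hjM (0,-1) (2 :: b :: t)).2 = (hjM (0,-1) (b :: t)).1 := hjM_snd _ _ _
      have hcoAC : IsCoprime (hjM (1,0) (2 :: b :: t)).1 (hjM (1,0) (2 :: b :: t)).2 :=
        ⟨-(hjM (0,-1) (2 :: b :: t)).2, (hjM (0,-1) (2 :: b :: t)).1,
          by linear_combination kdet⟩
      have hval' : (n : ℚ) / q = ((hjM (1,0) (2 :: b :: t)).1 : ℚ)
          / ((hjM (1,0) (2 :: b :: t)).2 : ℚ) := by rw [← hval, kval]
      obtain ⟨hnA, hqC⟩ := ident_lemma n q _ _ hq1 hco k1 (by linarith) hcoAC hval'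
      have hdvdZ : (hjM (1,0) (2 :: b :: t)).1 ∣ ((hjM (1,0) (2 :: b :: t)).2 + 1)^2 := by
        have : (n : ℤ) ∣ ((q : ℤ) + 1)^2 := by exact_mod_cast hdvd
        rwa [hnA, hqC] at this
      have hdvdInv : (hjM (1,0) (2 :: b :: t)).1 ∣
          (hjM (1,0) (2 :: b :: t)).2 * (hjM (0,-1) (2 :: b :: t)).1 - 1 :=
        ⟨(hjM (0,-1) (2 :: b :: t)).2, by linear_combination kdet⟩
      have hA2C : (hjM (1,0) (2 :: b :: t)).1 < 2 * (hjM (1,0) (2 :: b :: t)).2 := by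
        rw [eA, eC]; linarith
      have hn2B : (hjM (1,0) (2 :: b :: t)).1 < 2 * (hjM (0,-1) (2 :: b :: t)).1 := by
        rw [eA, eB]; linarith
      have hq'1 : 1 ≤ (hjM (0,-1) (2 :: b :: t)).1 := by linarith
      have hq'n : (hjM (0,-1) (2 :: b :: t)).1 < (hjM (1,0) (2 :: b :: t)).1 := by
        linarith [ku]
      have hCA := nt_lemma (hjM (1,0) (2 :: b :: t)).1 (hjM (1,0) (2 :: b :: t)).2
        (hjM (0,-1) (2 :: b :: t)).1 k1 k2 hq'1 hq'n hA2C hn2B hcoAC hdvdZ hdvdInv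
      exact hnd (allTwo _ hstr (by linarith))
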